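/- Let φ : ℤ_{≥0}^4 → ℤ² be the monoid homomorphism with φ(e₁) = (1,0), φ(e₂) = (0,1), φ(e₃) = (1,2), φ(e₄) = (0,3). The Graver basis of the associated toric ideal consists exactly of the five binomials y₁y₂² - y₃, y₂³ - y₄, y₁y₄ - y₂y₃, y₁²y₂y₄ - y₃², y₁³y₄² - y₃³; that is, these are precisely the primitive binomials of the toric ideal defined by the 2×4 matrix with columns (1,0), (0,1), (1,2), (0,3). -/
import Mathlib

/-- `x^α - x^β` is a primitive binomial of the toric ideal of the matrix with columns `A i`. -/
def IsPrimitiveBinomial {d n : ℕ} (A : Fin n → Fin d → ℤ) (α β : Fin n → ℕ) : Prop :=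
  α ≠ β ∧
  (∑ i, (α i : ℤ) • A i) = (∑ i, (β i : ℤ) • A i) ∧
  ∀ α' β' : Fin n → ℕ, α' ≠ β' →
    (∑ i, (α' i : ℤ) • A i) = (∑ i, (β' i : ℤ) • A i) →
    (∀ i, α' i ≤ α i) → (∀ i, β' i ≤ β i) → α' = α ∧ β' = β

lemma rel_iff (α β : Fin 4 → ℕ) :
    (∑ i, (α i : ℤ) • (![![1, 0], ![0, 1], ![1, 2], ![0, 3]] : Fin 4 → Fin 2 → ℤ) i) =
      (∑ i, (β i : ℤ) • (![![1, 0], ![0, 1], ![1, 2], ![0, 3]] : Fin 4 → Fin 2 → ℤ) i) ↔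
    (α 0 + α 2 = β 0 + β 2 ∧ α 1 + 2 * α 2 + 3 * α 3 = β 1 + 2 * β 2 + 3 * β 3) := by
  rw [funext_iff, Fin.forall_fin_two]
  simp [Fin.sum_univ_four]
  constructor
  · rintro ⟨h1, h2⟩; omega
  · rintro ⟨h1, h2⟩; omega

lemma dominate (a0 a1 a2 a3 b0 b1 b2 b3 : ℕ)
    (hne : ¬(a0 = b0 ∧ a1 = b1 ∧ a2 = b2 ∧ a3 = b3))
    (e1 : a0 + a2 = b0 + b2)
    (e2 : a1 + 2 * a2 + 3 * a3 = b1 + 2 * b2 + 3 * b3) :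
    (1 ≤ a0 ∧ 2 ≤ a1 ∧ 1 ≤ b2) ∨ (1 ≤ b0 ∧ 2 ≤ b1 ∧ 1 ≤ a2) ∨
    (3 ≤ a1 ∧ 1 ≤ b3) ∨ (3 ≤ b1 ∧ 1 ≤ a3) ∨
    (1 ≤ a0 ∧ 1 ≤ a3 ∧ 1 ≤ b1 ∧ 1 ≤ b2) ∨ (1 ≤ b0 ∧ 1 ≤ b3 ∧ 1 ≤ a1 ∧ 1 ≤ a2) ∨
    (2 ≤ a0 ∧ 1 ≤ a1 ∧ 1 ≤ a3 ∧ 2 ≤ b2) ∨ (2 ≤ b0 ∧ 1 ≤ b1 ∧ 1 ≤ b3 ∧ 2 ≤ a2) ∨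
    (3 ≤ a0 ∧ 2 ≤ a3 ∧ 3 ≤ b2) ∨ (3 ≤ b0 ∧ 2 ≤ b3 ∧ 3 ≤ a2) := by
  rcases lt_trichotomy a2 b2 with hs | hs | hs
  · rcases le_or_gt a3 b3 with ht | ht
    · exact Or.inl (by omega)
    · rcases lt_trichotomy (2*a2+3*a3) (2*b2+3*b3) with h | h | h
      · by_cases h2 : 2*a2+3*a3+1 = 2*b2+3*b3
        · refine Or.inr (Or.inr (Or.inr (Or.inr (Or.inr (Or.inr (Or.inl (by omega)))))))
        · exact Or.inl (by omega)
      · refine Or.inr (Or.inr (Or.inr (Or.inr (Or.inr (Or.inr (Or.inr (Or.inr (Or.inl (by omega)))))))))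
      · refine Or.inr (Or.inr (Or.inr (Or.inr (Or.inl (by omega)))))
  · rcases lt_trichotomy a3 b3 with ht | ht | ht
    · exact Or.inr (Or.inr (Or.inl (by omega)))
    · exact absurd (by omega) hne
    · exact Or.inr (Or.inr (Or.inr (Or.inl (by omega))))
  · rcases le_or_gt b3 a3 with ht | ht
    · exact Or.inr (Or.inl (by omega))
    · rcases lt_trichotomy (2*b2+3*b3) (2*a2+3*a3) with h | h | h
      · by_cases h2 : 2*b2+3*b3+1 = 2*a2+3*a3
        · refine Or.inr (Or.inr (Or.inr (Or.inr (Or.inr (Or.inr (Or.inr (Or.inl (by omega))))))))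
        · exact Or.inr (Or.inl (by omega))
      · refine Or.inr (Or.inr (Or.inr (Or.inr (Or.inr (Or.inr (Or.inr (Or.inr (Or.inr (by omega)))))))))
      · exact Or.inr (Or.inr (Or.inr (Or.inr (Or.inr (Or.inl (by omega))))))

lemma ne_components {α β : Fin 4 → ℕ} (h : α ≠ β) :
    ¬(α 0 = β 0 ∧ α 1 = β 1 ∧ α 2 = β 2 ∧ α 3 = β 3) := by
  rintro ⟨h0, h1, h2, h3⟩
  exact h (funext fun i => by fin_cases i <;> assumption)

lemma prim_symm {d n : ℕ} {A : Fin n → Fin d → ℤ} {α β : Fin n → ℕ}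
    (h : IsPrimitiveBinomial A α β) : IsPrimitiveBinomial A β α := by
  obtain ⟨h1, h2, h3⟩ := h
  refine ⟨h1.symm, h2.symm, fun α' β' hne hrel hα hβ => ?_⟩
  obtain ⟨ha, hb⟩ := h3 β' α' hne.symm hrel.symm hβ hα
  exact ⟨hb, ha⟩

section
set_option maxRecDepth 4000

lemma prim_concrete (γ δ : Fin 4 → ℕ)
    (hmem : (γ, δ) ∈ ({(![1, 2, 0, 0], ![0, 0, 1, 0]), (![0, 3, 0, 0], ![0, 0, 0, 1]),
          (![1, 0, 0, 1], ![0, 1, 1, 0]), (![2, 1, 0, 1], ![0, 0, 2, 0]),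
          (![3, 0, 0, 2], ![0, 0, 3, 0])} : Set ((Fin 4 → ℕ) × (Fin 4 → ℕ)))) :
    IsPrimitiveBinomial (![![1, 0], ![0, 1], ![1, 2], ![0, 3]] : Fin 4 → Fin 2 → ℤ) γ δ := by
  simp only [Set.mem_insert_iff, Set.mem_singleton_iff, Prod.mk.injEq] at hmem
  rcases hmem with ⟨hγ, hδ⟩ | ⟨hγ, hδ⟩ | ⟨hγ, hδ⟩ | ⟨hγ, hδ⟩ | ⟨hγ, hδ⟩ <;> subst hγ <;> subst hδ <;>
  · refine ⟨by decide, (rel_iff _ _).2 (by decide), fun α' β' hne hrel hα hβ => ?_⟩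
    rw [rel_iff] at hrel
    have hne' := ne_components hne
    have h0 := hα 0; have h1 := hα 1; have h2 := hα 2; have h3 := hα 3
    have k0 := hβ 0; have k1 := hβ 1; have k2 := hβ 2; have k3 := hβ 3
    simp at h0 h1 h2 h3 k0 k1 k2 k3
    refine ⟨funext fun i => ?_, funext fun i => ?_⟩ <;> fin_cases i <;> simp <;> omega

end

theorem graver_basis_single_oscillator (α β : Fin 4 → ℕ) :
    IsPrimitiveBinomial (![![1, 0], ![0, 1], ![1, 2], ![0, 3]] : Fin 4 → Fin 2 → ℤ) α β ↔
      ((α, β) ∈ ({(![1, 2, 0, 0], ![0, 0, 1, 0]), (![0, 3, 0, 0], ![0, 0, 0, 1]),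
          (![1, 0, 0, 1], ![0, 1, 1, 0]), (![2, 1, 0, 1], ![0, 0, 2, 0]),
          (![3, 0, 0, 2], ![0, 0, 3, 0])} : Set ((Fin 4 → ℕ) × (Fin 4 → ℕ))) ∨
        (β, α) ∈ ({(![1, 2, 0, 0], ![0, 0, 1, 0]), (![0, 3, 0, 0], ![0, 0, 0, 1]),
          (![1, 0, 0, 1], ![0, 1, 1, 0]), (![2, 1, 0, 1], ![0, 0, 2, 0]),
          (![3, 0, 0, 2], ![0, 0, 3, 0])} : Set ((Fin 4 → ℕ) × (Fin 4 → ℕ)))) := by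
  constructor
  · rintro ⟨hne, hrel, hmin⟩
    rw [rel_iff] at hrel
    have key := dominate (α 0) (α 1) (α 2) (α 3) (β 0) (β 1) (β 2) (β 3)
      (ne_components hne) hrel.1 hrel.2
    simp only [Set.mem_insert_iff, Set.mem_singleton_iff, Prod.mk.injEq]
    rcases key with h | h | h | h | h | h | h | h | h | h
    · obtain ⟨hA, hB⟩ := hmin ![1,2,0,0] ![0,0,1,0] (by decide) ((rel_iff _ _).2 (by decide))
        (fun i => by fin_cases i <;> simp <;> omega) (fun i => by fin_cases i <;> simp <;> omega)
      exact Or.inl (Or.inl ⟨hA.symm, hB.symm⟩)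
    · obtain ⟨hA, hB⟩ := hmin ![0,0,1,0] ![1,2,0,0] (by decide) ((rel_iff _ _).2 (by decide))
        (fun i => by fin_cases i <;> simp <;> omega) (fun i => by fin_cases i <;> simp <;> omega)
      exact Or.inr (Or.inl ⟨hB.symm, hA.symm⟩)
    · obtain ⟨hA, hB⟩ := hmin ![0,3,0,0] ![0,0,0,1] (by decide) ((rel_iff _ _).2 (by decide))
        (fun i => by fin_cases i <;> simp <;> omega) (fun i => by fin_cases i <;> simp <;> omega)
      exact Or.inl (Or.inr (Or.inl ⟨hA.symm, hB.symm⟩))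
    · obtain ⟨hA, hB⟩ := hmin ![0,0,0,1] ![0,3,0,0] (by decide) ((rel_iff _ _).2 (by decide))
        (fun i => by fin_cases i <;> simp <;> omega) (fun i => by fin_cases i <;> simp <;> omega)
      exact Or.inr (Or.inr (Or.inl ⟨hB.symm, hA.symm⟩))
    · obtain ⟨hA, hB⟩ := hmin ![1,0,0,1] ![0,1,1,0] (by decide) ((rel_iff _ _).2 (by decide))
        (fun i => by fin_cases i <;> simp <;> omega) (fun i => by fin_cases i <;> simp <;> omega)
      exact Or.inl (Or.inr (Or.inr (Or.inl ⟨hA.symm, hB.symm⟩)))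
    · obtain ⟨hA, hB⟩ := hmin ![0,1,1,0] ![1,0,0,1] (by decide) ((rel_iff _ _).2 (by decide))
        (fun i => by fin_cases i <;> simp <;> omega) (fun i => by fin_cases i <;> simp <;> omega)
      exact Or.inr (Or.inr (Or.inr (Or.inl ⟨hB.symm, hA.symm⟩)))
    · obtain ⟨hA, hB⟩ := hmin ![2,1,0,1] ![0,0,2,0] (by decide) ((rel_iff _ _).2 (by decide))
        (fun i => by fin_cases i <;> simp <;> omega) (fun i => by fin_cases i <;> simp <;> omega)
      exact Or.inl (Or.inr (Or.inr (Or.inr (Or.inl ⟨hA.symm, hB.symm⟩))))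
    · obtain ⟨hA, hB⟩ := hmin ![0,0,2,0] ![2,1,0,1] (by decide) ((rel_iff _ _).2 (by decide))
        (fun i => by fin_cases i <;> simp <;> omega) (fun i => by fin_cases i <;> simp <;> omega)
      exact Or.inr (Or.inr (Or.inr (Or.inr (Or.inl ⟨hB.symm, hA.symm⟩))))
    · obtain ⟨hA, hB⟩ := hmin ![3,0,0,2] ![0,0,3,0] (by decide) ((rel_iff _ _).2 (by decide))
        (fun i => by fin_cases i <;> simp <;> omega) (fun i => by fin_cases i <;> simp <;> omega)
      exact Or.inl (Or.inr (Or.inr (Or.inr (Or.inr ⟨hA.symm, hB.symm⟩))))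
    · obtain ⟨hA, hB⟩ := hmin ![0,0,3,0] ![3,0,0,2] (by decide) ((rel_iff _ _).2 (by decide))
        (fun i => by fin_cases i <;> simp <;> omega) (fun i => by fin_cases i <;> simp <;> omega)
      exact Or.inr (Or.inr (Or.inr (Or.inr (Or.inr ⟨hB.symm, hA.symm⟩))))
  · rintro (h | h)
    · exact prim_concrete α β h
    · exact prim_symm (prim_concrete β α h)
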